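/- arXiv:1811.05923 — 4 statements merged into one kernel-verified Lean document; each statement's English description precedes it below -/
import Mathlib

section
/- Let μ : ℝ → ℝ be continuous and define π(a) := exp(−∫₀ᵃ μ(h) dh). Let n₀ : ℝ → ℝ be differentiable and ν : ℝ × ℝ → ℝ be continuously differentiable. Define, on the region {(t,a) : 0 ≤ t ≤ a}, n(t,a) := π(a) · ( n₀(a−t)/π(a−t) + ∫_{a−t}^{a} ν(τ + t − a, τ)/π(τ) dτ ). Then n satisfies (∂/∂t + ∂/∂a) n(t,a) = ν(t,a) − μ(a) n(t,a) at every interior point of this region, and n(0,a) = n₀(a) for all a ≥ 0. -/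
/-- The method-of-characteristics formula
n(t,a) = π(a) ( n₀(a−t)/π(a−t) + ∫_{a−t}^a ν(τ+t−a, τ)/π(τ) dτ ), with
π(a) = exp(−∫₀ᵃ μ), solves (∂/∂t + ∂/∂a) n = ν − μ n at every interior point of
the region {(t,a) : 0 ≤ t ≤ a}, and satisfies n(0,a) = n₀(a) for a ≥ 0. -/
theorem characteristics_solution_below_diagonal
    (μ : ℝ → ℝ) (hμ : Continuous μ)
    (surv : ℝ → ℝ) (hsurv : ∀ a, surv a = Real.exp (-∫ h in (0:ℝ)..a, μ h))
    (n₀ : ℝ → ℝ) (hn₀ : Differentiable ℝ n₀)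
    (ν : ℝ × ℝ → ℝ) (hν : ContDiff ℝ 1 ν)
    (n : ℝ × ℝ → ℝ)
    (hn : ∀ t a : ℝ, 0 ≤ t → t ≤ a →
      n (t, a) = surv a * (n₀ (a - t) / surv (a - t) +
        ∫ τ in (a - t)..a, ν (τ + t - a, τ) / surv τ)) :
    (∀ p : ℝ × ℝ, p ∈ interior {q : ℝ × ℝ | 0 ≤ q.1 ∧ q.1 ≤ q.2} →
      HasDerivAt (fun s => n (p.1 + s, p.2 + s)) (ν p - μ p.2 * n p) 0) ∧
    (∀ a : ℝ, 0 ≤ a → n (0, a) = n₀ a) := by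
  have hpos : ∀ a, 0 < surv a := fun a => (hsurv a) ▸ Real.exp_pos _
  have hne : ∀ a, surv a ≠ 0 := fun a => (hpos a).ne'
  -- derivative of surv
  have hsurv_deriv : ∀ a, HasDerivAt surv (-μ a * surv a) a := by
    intro a
    have hI : HasDerivAt (fun x => ∫ h in (0:ℝ)..x, μ h) (μ a) a :=
      intervalIntegral.integral_hasDerivAt_right (hμ.intervalIntegrable _ _)
        (hμ.stronglyMeasurableAtFilter _ _) hμ.continuousAt
    have h2 : HasDerivAt (fun x => Real.exp (-∫ h in (0:ℝ)..x, μ h))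
        (Real.exp (-∫ h in (0:ℝ)..a, μ h) * (-μ a)) a := hI.neg.exp
    have hfun : surv = fun x => Real.exp (-∫ h in (0:ℝ)..x, μ h) := funext hsurv
    rw [hfun]
    convert h2 using 1
    rw [← hsurv a, hfun]
    ring
  have hsurv_cont : Continuous surv :=
    (funext hsurv : surv = _) ▸
      (Real.continuous_exp.comp (intervalIntegral.continuous_primitive
        (fun a b => hμ.intervalIntegrable a b) 0).neg)
  constructor
  · intro p hp
    have hps : p ∈ {q : ℝ × ℝ | 0 ≤ q.1 ∧ q.1 ≤ q.2} := interior_subset hp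
    obtain ⟨ht0, hta⟩ := hps
    set t := p.1
    set a := p.2
    set C : ℝ := n₀ (a - t) / surv (a - t) with hC
    set G : ℝ → ℝ := fun τ => ν (τ + t - a, τ) / surv τ with hG
    have hGcont : Continuous G :=
      (hν.continuous.comp (by continuity)).div hsurv_cont hne
    set h : ℝ → ℝ := fun x => surv x * (C + ∫ τ in (a - t)..x, G τ) with hh
    -- n along the characteristic eventually equals h ∘ (a + ·)
    have hmem : ∀ᶠ s in nhds (0:ℝ), (t + s, a + s) ∈ {q : ℝ × ℝ | 0 ≤ q.1 ∧ q.1 ≤ q.2} := by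
      have hc : ContinuousAt (fun s : ℝ => (t + s, a + s)) 0 := by fun_prop
      have : {q : ℝ × ℝ | 0 ≤ q.1 ∧ q.1 ≤ q.2} ∈ nhds ((t, a) : ℝ × ℝ) := by
        apply mem_interior_iff_mem_nhds.mp
        simpa using hp
      have := hc.preimage_mem_nhds (by simpa using this)
      filter_upwards [this] with s hs using hs
    have hev : ∀ᶠ s in nhds (0:ℝ), n (t + s, a + s) = h (a + s) := by
      filter_upwards [hmem] with s hs
      obtain ⟨h1, h2⟩ := hs
      rw [hn _ _ h1 h2, hh]
      have e1 : a + s - (t + s) = a - t := by ring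
      rw [e1]
      congr 1
      congr 1
      apply intervalIntegral.integral_congr
      intro τ _
      simp only [hG]
      congr 2
      ring
    -- h has the right derivative at a
    have hF : HasDerivAt (fun x => ∫ τ in (a - t)..x, G τ) (G a) a :=
      intervalIntegral.integral_hasDerivAt_right (hGcont.intervalIntegrable _ _)
        (hGcont.stronglyMeasurableAtFilter _ _) hGcont.continuousAt
    have hha : HasDerivAt h
        ((-μ a * surv a) * (C + ∫ τ in (a - t)..a, G τ) + surv a * G a) a := by
      have := (hsurv_deriv a).mul ((hasDerivAt_const a C).add hF)
      simp only [zero_add] at this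
      exact this
    have hcomp : HasDerivAt (fun s => h (a + s))
        (((-μ a * surv a) * (C + ∫ τ in (a - t)..a, G τ) + surv a * G a) * 1) 0 := by
      have hha' : HasDerivAt h
          ((-μ a * surv a) * (C + ∫ τ in (a - t)..a, G τ) + surv a * G a) ((fun s : ℝ => a + s) 0) := by
        simpa using hha
      have hid : HasDerivAt (fun s : ℝ => a + s) 1 0 := (hasDerivAt_id (0:ℝ)).const_add a
      exact hha'.comp 0 hid
    have hval : n p = surv a * (C + ∫ τ in (a - t)..a, G τ) := by
      have := hn t a ht0 hta
      simpa [hC, hG] using this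
    have hGa : G a = ν p / surv a := by
      have e : a + t - a = t := by ring
      simp only [hG, e]
      rfl
    have := hcomp.congr_of_eventuallyEq hev
    refine this.congr_deriv ?_
    rw [hval, hGa, mul_one, mul_div_cancel₀ _ (hne a)]
    ring
  · intro a ha
    rw [hn 0 a le_rfl ha]
    simp only [sub_zero, intervalIntegral.integral_same, add_zero]
    rw [mul_comm, div_mul_eq_mul_div, mul_div_assoc, div_self (hne a), mul_one]
end

section
/- Let μ : ℝ → ℝ be continuous, π(a) := exp(−∫₀ᵃ μ(h) dh), and let ν : ℝ × ℝ → ℝ be continuous. Suppose n : ℝ × ℝ → ℝ is continuously differentiable on the region {(t,a) : 0 ≤ t ≤ a}, satisfies (∂/∂t + ∂/∂a) n(t,a) = ν(t,a) − μ(a) n(t,a) there, and satisfies n(0,a) = n₀(a) for all a ≥ 0. Then necessarily n(t,a) = π(a) · ( n₀(a−t)/π(a−t) + ∫_{a−t}^{a} ν(τ + t − a, τ)/π(τ) dτ ) for all 0 ≤ t ≤ a; in particular, the solution on this region is uniquely determined by the initial data n₀. -/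
/-- Uniqueness on the region {(t,a) : 0 ≤ t ≤ a}: any C¹ solution of
(∂/∂t + ∂/∂a) n = ν − μ n with initial data n(0,a) = n₀(a) is given by the
method-of-characteristics formula, hence is uniquely determined by n₀. -/
theorem characteristics_uniqueness_below_diagonal
    (μ : ℝ → ℝ) (hμ : Continuous μ)
    (surv : ℝ → ℝ) (hsurv : ∀ a, surv a = Real.exp (-∫ h in (0:ℝ)..a, μ h))
    (ν : ℝ × ℝ → ℝ) (hν : Continuous ν)
    (n : ℝ × ℝ → ℝ) (n₀ : ℝ → ℝ)
    (hreg : ContDiffOn ℝ 1 n {q : ℝ × ℝ | 0 ≤ q.1 ∧ q.1 ≤ q.2})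
    (hpde : ∀ t a : ℝ, 0 ≤ t → t ≤ a →
      HasDerivAt (fun s => n (t + s, a + s)) (ν (t, a) - μ a * n (t, a)) 0)
    (hic : ∀ a : ℝ, 0 ≤ a → n (0, a) = n₀ a) :
    ∀ t a : ℝ, 0 ≤ t → t ≤ a →
      n (t, a) = surv a * (n₀ (a - t) / surv (a - t) +
        ∫ τ in (a - t)..a, ν (τ + t - a, τ) / surv τ) := by
  intro t a ht hta
  set c : ℝ := a - t with hc
  have hc0 : 0 ≤ c := by simp [hc]; linarith
  -- F, E
  set F : ℝ → ℝ := fun x => ∫ h in (0:ℝ)..x, μ h with hF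
  set E : ℝ → ℝ := fun x => Real.exp (F x) with hEdef
  have hEpos : ∀ x, 0 < E x := fun x => Real.exp_pos _
  have hsurvE : ∀ x, surv x = (E x)⁻¹ := by
    intro x
    rw [hsurv x, Real.exp_neg]
  have hF' : ∀ x, HasDerivAt F (μ x) x := by
    intro x
    exact intervalIntegral.integral_hasDerivAt_right
      (hμ.intervalIntegrable _ _)
      (hμ.stronglyMeasurable.stronglyMeasurableAtFilter)
      hμ.continuousAt
  have hE' : ∀ x, HasDerivAt E (E x * μ x) x := fun x => (hF' x).exp
  have hEcont : Continuous E :=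
    continuous_iff_continuousAt.2 fun x => (hE' x).continuousAt
  -- G, P
  set G : ℝ → ℝ := fun τ => ν (τ + t - a, τ) * E τ with hG
  have hGcont : Continuous G := by
    apply Continuous.mul _ hEcont
    exact hν.comp (by continuity)
  set P : ℝ → ℝ := fun x => ∫ τ in c..x, G τ with hP
  have hP' : ∀ x, HasDerivAt P (G x) x := by
    intro x
    exact intervalIntegral.integral_hasDerivAt_right
      (hGcont.intervalIntegrable _ _)
      (hGcont.stronglyMeasurable.stronglyMeasurableAtFilter)
      hGcont.continuousAt
  have hPcont : Continuous P :=
    continuous_iff_continuousAt.2 fun x => (hP' x).continuousAt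
  -- the function along characteristics
  set h : ℝ → ℝ := fun s => n (s, c + s) * E (c + s) - P (c + s) with hh
  -- derivative of n along characteristic
  have hn' : ∀ s : ℝ, 0 ≤ s → HasDerivAt (fun x => n (x, c + x))
      (ν (s, c + s) - μ (c + s) * n (s, c + s)) s := by
    intro s hs
    have h1 := hpde s (c + s) hs (by linarith)
    have h2 : HasDerivAt (fun x : ℝ => x - s) 1 s := by
      simpa using (hasDerivAt_id s).sub_const s
    rw [show (0:ℝ) = s - s by ring] at h1
    have h3 : HasDerivAt ((fun r => n (s + r, c + s + r)) ∘ fun x : ℝ => x - s)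
        ((ν (s, c + s) - μ (c + s) * n (s, c + s)) * 1) s :=
      HasDerivAt.comp s h1 h2
    have heq : ((fun r => n (s + r, c + s + r)) ∘ fun x : ℝ => x - s)
        = fun x => n (x, c + x) := by
      funext x
      simp only [Function.comp]
      rw [show s + (x - s) = x by ring, show c + s + (x - s) = c + x by ring]
    rw [heq] at h3
    simpa using h3
  have hderiv : ∀ s ∈ Set.Ico (0:ℝ) t, HasDerivWithinAt h 0 (Set.Ici s) s := by
    intro s hs
    have hs0 : 0 ≤ s := hs.1
    have hEc : HasDerivAt (fun x => E (c + x)) (E (c + s) * μ (c + s)) s := by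
      have := (hE' (c + s)).comp s ((hasDerivAt_id s).const_add c)
      exact this.congr_deriv (by ring)
    have hPc : HasDerivAt (fun x => P (c + x)) (G (c + s)) s := by
      have := (hP' (c + s)).comp s ((hasDerivAt_id s).const_add c)
      exact this.congr_deriv (by ring)
    have hmul := (hn' s hs0).mul hEc
    have := hmul.sub hPc
    have hGval : G (c + s) = ν (s, c + s) * E (c + s) := by
      simp only [hG]
      congr 2
      simp [hc]; ring
    have : HasDerivAt h 0 s := by
      refine this.congr_deriv ?_
      rw [hGval]; ring
    exact this.hasDerivWithinAt
  -- continuity of h on [0, t]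
  have hcont : ContinuousOn h (Set.Icc 0 t) := by
    apply ContinuousOn.sub
    · apply ContinuousOn.mul
      · apply (hreg.continuousOn).comp
          (Continuous.continuousOn (by continuity))
        intro s hs
        exact ⟨hs.1, by simp; linarith [hs.1, hc0]⟩
      · exact (hEcont.comp (by continuity)).continuousOn
    · exact (hPcont.comp (by continuity)).continuousOn
  have hconst := constant_of_has_deriv_right_zero hcont hderiv t
    (Set.right_mem_Icc.2 ht)
  -- unpack
  have hct : c + t = a := by simp [hc]
  have hP0 : P (c + 0) = 0 := by simp [hP]
  have key : n (t, a) * E a - P a = n₀ c * E c := by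
    have := hconst
    simp only [hh] at this
    rw [hct] at this
    rw [this, hP0]
    simp only [add_zero, sub_zero]
    rw [hic c hc0]
  -- now rewrite RHS
  have hint : (∫ τ in c..a, ν (τ + t - a, τ) / surv τ) = P a := by
    simp only [hP, hG]
    apply intervalIntegral.integral_congr
    intro τ _
    show ν (τ + t - a, τ) / surv τ = ν (τ + t - a, τ) * E τ
    rw [hsurvE τ, div_eq_mul_inv, inv_inv]
  rw [hsurvE, hsurvE, hint]
  have hEa := (hEpos a).ne'
  have hEc := (hEpos c).ne'
  field_simp
  linarith [key]
end

section
/- Let μ : ℝ → ℝ be continuous, π(a) := exp(−∫₀ᵃ μ(h) dh), let ν : ℝ × ℝ → ℝ be continuous, n₀ : ℝ → ℝ continuous, and G : ℝ → ℝ continuous. Define the piecewise function n(t,a) := π(a)·( n₀(a−t)/π(a−t) + ∫_{a−t}^{a} ν(τ+t−a, τ)/π(τ) dτ ) for t ≤ a, and n(t,a) := π(a)·( G(t−a) + ∫₀ᵃ ν(τ+t−a, τ)/π(τ) dτ ) for t > a. If the compatibility condition n₀(0) = G(0) holds, then the two branches agree on the diagonal t = a, and n is continuous on {(t,a) : t ≥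 0, a ≥ 0}. -/
/-- If the compatibility condition n₀(0) = G(0) holds, the two branches
of the piecewise method-of-characteristics solution agree on the diagonal t = a, and
the piecewise function n is continuous on the quadrant {(t,a) : t ≥ 0, a ≥ 0}. -/
theorem piecewise_solution_continuous
    (μ : ℝ → ℝ) (hμ : Continuous μ)
    (surv : ℝ → ℝ) (hsurv : ∀ a, surv a = Real.exp (-∫ h in (0:ℝ)..a, μ h))
    (ν : ℝ × ℝ → ℝ) (hν : Continuous ν)
    (n₀ : ℝ → ℝ) (hn₀ : Continuous n₀)
    (G : ℝ → ℝ) (hG : Continuous G)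
    (n : ℝ × ℝ → ℝ)
    (hn : ∀ t a : ℝ, n (t, a) =
      if t ≤ a then
        surv a * (n₀ (a - t) / surv (a - t) +
          ∫ τ in (a - t)..a, ν (τ + t - a, τ) / surv τ)
      else
        surv a * (G (t - a) + ∫ τ in (0:ℝ)..a, ν (τ + t - a, τ) / surv τ))
    (hcompat : n₀ 0 = G 0) :
    (∀ a : ℝ,
      surv a * (n₀ 0 / surv 0 + ∫ τ in (0:ℝ)..a, ν (τ, τ) / surv τ) =
      surv a * (G 0 + ∫ τ in (0:ℝ)..a, ν (τ, τ) / surv τ)) ∧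
    ContinuousOn n {p : ℝ × ℝ | 0 ≤ p.1 ∧ 0 ≤ p.2} := by
  have hsurv0 : surv 0 = 1 := by simp [hsurv]
  have hsurvcont : Continuous surv := by
    have h1 : Continuous fun a : ℝ => ∫ h in (0:ℝ)..a, μ h :=
      intervalIntegral.continuous_primitive (fun a b => hμ.intervalIntegrable a b) 0
    have : Continuous fun a => Real.exp (-∫ h in (0:ℝ)..a, μ h) :=
      Real.continuous_exp.comp h1.neg
    exact (funext hsurv : surv = _) ▸ this
  have hsurvpos : ∀ a, surv a ≠ 0 := fun a => by
    rw [hsurv]; exact (Real.exp_pos _).ne'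
  constructor
  · intro a
    rw [hsurv0, hcompat, div_one]
  · -- integrand as a parametric family
    set f : (ℝ × ℝ) → ℝ → ℝ := fun x τ => ν (τ + x.1 - x.2, τ) / surv τ with hf
    have hfcont : Continuous (Function.uncurry f) := by
      apply Continuous.div
      · exact hν.comp (by fun_prop)
      · exact hsurvcont.comp continuous_snd
      · exact fun x => hsurvpos _
    have hprim : ∀ s : (ℝ × ℝ) → ℝ, Continuous s →
        Continuous fun x : ℝ × ℝ => ∫ τ in (0:ℝ)..s x, f x τ := fun s hs =>
      intervalIntegral.continuous_parametric_intervalIntegral_of_continuous hfcont hs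
    have hF₁ : Continuous fun x : ℝ × ℝ =>
        surv x.2 * (n₀ (x.2 - x.1) / surv (x.2 - x.1) +
          ((∫ τ in (0:ℝ)..x.2, f x τ) - ∫ τ in (0:ℝ)..(x.2 - x.1), f x τ)) := by
      apply Continuous.mul (hsurvcont.comp continuous_snd)
      apply Continuous.add
      · exact Continuous.div (hn₀.comp (continuous_snd.sub continuous_fst))
          (hsurvcont.comp (continuous_snd.sub continuous_fst)) fun x => hsurvpos _
      · exact (hprim _ continuous_snd).sub (hprim _ (continuous_snd.sub continuous_fst))
    have hF₂ : Continuous fun x : ℝ × ℝ =>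
        surv x.2 * (G (x.1 - x.2) + ∫ τ in (0:ℝ)..x.2, f x τ) := by
      apply Continuous.mul (hsurvcont.comp continuous_snd)
      exact (hG.comp (continuous_fst.sub continuous_snd)).add (hprim _ continuous_snd)
    have hn' : n = fun x : ℝ × ℝ => if x.1 ≤ x.2 then
        surv x.2 * (n₀ (x.2 - x.1) / surv (x.2 - x.1) +
          ((∫ τ in (0:ℝ)..x.2, f x τ) - ∫ τ in (0:ℝ)..(x.2 - x.1), f x τ))
      else surv x.2 * (G (x.1 - x.2) + ∫ τ in (0:ℝ)..x.2, f x τ) := by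
      funext x
      obtain ⟨t, a⟩ := x
      rw [hn t a]
      have hsub : (∫ τ in (0:ℝ)..a, f (t, a) τ) - ∫ τ in (0:ℝ)..(a - t), f (t, a) τ
          = ∫ τ in (a - t)..a, f (t, a) τ :=
        intervalIntegral.integral_interval_sub_left
          ((hfcont.uncurry_left _).intervalIntegrable _ _)
          ((hfcont.uncurry_left _).intervalIntegrable _ _)
      simp only [hf]
      rw [hsub]
    have : Continuous n := by
      rw [hn']
      apply Continuous.if_le hF₁ hF₂ continuous_fst continuous_snd
      intro x hx
      have h1 : x.2 - x.1 = 0 := by rw [hx]; ring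
      have h2 : x.1 - x.2 = 0 := by rw [hx]; ring
      simp [h1, h2, hsurv0, hcompat]
    exact this.continuousOn
end

section
/- Let μ : ℝ → ℝ be continuous with μ ≥ 0 on [0,∞), π(a) := exp(−∫₀ᵃ μ(h) dh), let f : ℝ → ℝ be a continuous nonnegative fertility function vanishing for large a (compactly supported in [0,∞)), ν : ℝ × ℝ → ℝ continuous and compactly supported, n₀ : ℝ → ℝ continuous and compactly supported in [0,∞), and let G : [0,∞) → ℝ be continuous. Suppose n(t,a) is defined by n(t,a) = π(a)·( n₀(a−t)/π(a−t) + ∫_{a−t}^{a} ν(τ+t−a,τ)/π(τ) dτ ) for t ≤ a and n(t,a) = π(a)·( G(t−a) + ∫₀ᵃ ν(τ+t−a,τ)/π(τ) dτ ) for t > a, and that G(t) = ∫₀^∞ f(a) n(t,a) da for all t ≥ 0. Then G satisfies the Volterra integral equation G(t) = ∫₀ᵗ G(t−a) K(a) da + H(t), where K(a) := f(a) π(a) and H(t) := ∫₀ᵗ ∫₀ᵃ f(a) (π(a)/π(τ)) ν(τ+t−a, τ) dτ da + ∫_t^∞ ∫_{a−t}^{a} f(a) (π(a)/π(τ)) ν(τ+t−a,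 τ) dτ da + ∫_t^∞ f(a) (π(a)/π(a−t)) n₀(a−t) da. -/
open MeasureTheory

/-- The birth function G(t) = ∫₀^∞ f(a) n(t,a) da, where n is the
method-of-characteristics solution, satisfies the Volterra integral equation
G(t) = ∫₀ᵗ G(t−a) K(a) da + H(t) with kernel K(a) = f(a) π(a) and non-homogeneous
term H determined by the initial population and the immigration rate. -/
theorem birth_function_volterra
    (μ : ℝ → ℝ) (hμ : Continuous μ) (hμ0 : ∀ a : ℝ, 0 ≤ a → 0 ≤ μ a)
    (surv : ℝ → ℝ) (hsurv : ∀ a, surv a = Real.exp (-∫ h in (0:ℝ)..a, μ h))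
    (f : ℝ → ℝ) (hf : Continuous f) (hf0 : ∀ a, 0 ≤ f a)
    (hfsupp : HasCompactSupport f) (hfsupp' : tsupport f ⊆ Set.Ici 0)
    (ν : ℝ × ℝ → ℝ) (hν : Continuous ν) (hνsupp : HasCompactSupport ν)
    (n₀ : ℝ → ℝ) (hn₀ : Continuous n₀)
    (hn₀supp : HasCompactSupport n₀) (hn₀supp' : tsupport n₀ ⊆ Set.Ici 0)
    (G : ℝ → ℝ) (hG : ContinuousOn G (Set.Ici 0))
    (n : ℝ × ℝ → ℝ)
    (hn : ∀ t a : ℝ, n (t, a) =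
      if t ≤ a then
        surv a * (n₀ (a - t) / surv (a - t) +
          ∫ τ in (a - t)..a, ν (τ + t - a, τ) / surv τ)
      else
        surv a * (G (t - a) + ∫ τ in (0:ℝ)..a, ν (τ + t - a, τ) / surv τ))
    (hGn : ∀ t : ℝ, 0 ≤ t → G t = ∫ a in Set.Ioi (0:ℝ), f a * n (t, a)) :
    ∀ t : ℝ, 0 ≤ t →
      G t = (∫ a in (0:ℝ)..t, G (t - a) * (f a * surv a)) +
        ((∫ a in (0:ℝ)..t, ∫ τ in (0:ℝ)..a,
            f a * (surv a / surv τ) * ν (τ + t - a, τ)) +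
         (∫ a in Set.Ioi t, ∫ τ in (a - t)..a,
            f a * (surv a / surv τ) * ν (τ + t - a, τ)) +
         ∫ a in Set.Ioi t, f a * (surv a / surv (a - t)) * n₀ (a - t)) := by
  intro t ht
  have hπpos : ∀ a, 0 < surv a := fun a => by rw [hsurv]; exact Real.exp_pos _
  have hπcont : Continuous surv := by
    have h1 : Continuous fun a : ℝ => ∫ h in (0:ℝ)..a, μ h :=
      intervalIntegral.continuous_primitive (fun a b => hμ.intervalIntegrable a b) 0
    have h2 : Continuous fun a : ℝ => Real.exp (-∫ h in (0:ℝ)..a, μ h) :=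
      Real.continuous_exp.comp h1.neg
    have : surv = fun a : ℝ => Real.exp (-∫ h in (0:ℝ)..a, μ h) := funext hsurv
    rw [this]; exact h2
  -- the four pieces
  set A : ℝ → ℝ := fun a => G (t - a) * (f a * surv a) with hAdef
  set B : ℝ → ℝ := fun a => ∫ τ in (0:ℝ)..a, f a * (surv a / surv τ) * ν (τ + t - a, τ)
    with hBdef
  set C : ℝ → ℝ := fun a => ∫ τ in (a - t)..a, f a * (surv a / surv τ) * ν (τ + t - a, τ)
    with hCdef
  set D : ℝ → ℝ := fun a => f a * (surv a / surv (a - t)) * n₀ (a - t) with hDdef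
  -- the jointly continuous integrand
  set W : ℝ → ℝ → ℝ := fun a τ => f a * (surv a / surv τ) * ν (τ + t - a, τ) with hWdef
  have hWcont : Continuous (Function.uncurry W) := by
    apply Continuous.mul
    · exact Continuous.mul (hf.comp continuous_fst)
        ((hπcont.comp continuous_fst).div (hπcont.comp continuous_snd)
          fun p => (hπpos p.2).ne')
    · exact hν.comp (by fun_prop)
  have hWa : ∀ a, Continuous fun τ => W a τ := fun a =>
    hWcont.comp (Continuous.prodMk_right a)
  -- pulling constants into interval integrals
  have hmul : ∀ a u v : ℝ,
      f a * surv a * ∫ τ in u..v, ν (τ + t - a, τ) / surv τ = ∫ τ in u..v, W a τ := by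
    intro a u v
    rw [← intervalIntegral.integral_const_mul]
    apply intervalIntegral.integral_congr
    intro τ _
    simp only [hWdef]
    ring
  -- continuity of B and C
  have hBcont : Continuous B :=
    intervalIntegral.continuous_parametric_intervalIntegral_of_continuous hWcont continuous_id
  have hIcont : Continuous fun a => ∫ τ in (0:ℝ)..(a - t), W a τ :=
    intervalIntegral.continuous_parametric_intervalIntegral_of_continuous hWcont
      (continuous_id.sub continuous_const)
  have hCeq : ∀ a, C a = (∫ τ in (0:ℝ)..a, W a τ) - ∫ τ in (0:ℝ)..(a - t), W a τ := by
    intro a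
    rw [intervalIntegral.integral_interval_sub_left ((hWa a).intervalIntegrable _ _)
      ((hWa a).intervalIntegrable _ _)]
  have hCcont : Continuous C := by
    have : C = fun a => (∫ τ in (0:ℝ)..a, W a τ) - ∫ τ in (0:ℝ)..(a - t), W a τ :=
      funext hCeq
    rw [this]; exact hBcont.sub hIcont
  have hCsupp : HasCompactSupport C := by
    apply hfsupp.mono
    intro a ha
    simp only [Function.mem_support] at ha ⊢
    intro h0
    apply ha
    simp [hCdef, hWdef, h0]
  have hDcont : Continuous D := by
    apply Continuous.mul
    · exact hf.mul (hπcont.div (hπcont.comp (continuous_id.sub continuous_const))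
        fun a => (hπpos _).ne')
    · exact hn₀.comp (continuous_id.sub continuous_const)
  have hDsupp : HasCompactSupport D := by
    apply hfsupp.mono
    intro a ha
    simp only [Function.mem_support] at ha ⊢
    intro h0
    apply ha
    simp [hDdef, h0]
  have hCint : IntegrableOn C (Set.Ioi t) :=
    (hCcont.integrable_of_hasCompactSupport hCsupp).integrableOn
  have hDint : IntegrableOn D (Set.Ioi t) :=
    (hDcont.integrable_of_hasCompactSupport hDsupp).integrableOn
  -- continuity and integrability of A and B on [0, t]
  have hAcont : ContinuousOn A (Set.Icc 0 t) := by
    apply ContinuousOn.mul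
    · exact hG.comp (continuous_const.sub continuous_id).continuousOn
        fun a ha => by simpa using sub_nonneg.mpr ha.2
    · exact (hf.mul hπcont).continuousOn
  have hAint : IntegrableOn A (Set.Ioc 0 t) :=
    (hAcont.integrableOn_Icc).mono_set Set.Ioc_subset_Icc_self
  have hBint : IntegrableOn B (Set.Ioc 0 t) := hBcont.integrableOn_Ioc
  -- pointwise identity on Ioi t
  have heqC : Set.EqOn (fun a => f a * n (t, a)) (fun a => C a + D a) (Set.Ioi t) := by
    intro a ha
    have hta : t < a := ha
    simp only
    rw [hn t a, if_pos hta.le, mul_add (surv a), mul_add (f a), ← mul_assoc, ← mul_assoc,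
      hmul]
    have h2 : f a * surv a * (n₀ (a - t) / surv (a - t)) = D a := by
      simp only [hDdef]; ring
    rw [h2, add_comm]
  -- a.e. identity on Ioc 0 t
  have htae : ∀ᵐ a : ℝ ∂volume, a ≠ t := by
    rw [MeasureTheory.ae_iff]
    have : {a : ℝ | ¬a ≠ t} = {t} := by ext a; simp
    rw [this]
    exact Real.volume_singleton
  have haeAB : (fun a => f a * n (t, a)) =ᵐ[volume.restrict (Set.Ioc 0 t)]
      fun a => A a + B a := by
    rw [Filter.EventuallyEq, ae_restrict_iff' measurableSet_Ioc]
    filter_upwards [htae] with a hat hmem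
    have hlt : a < t := lt_of_le_of_ne hmem.2 hat
    rw [hn t a, if_neg (not_le.mpr hlt), mul_add (surv a), mul_add (f a), ← mul_assoc,
      ← mul_assoc, hmul]
    have h2 : f a * surv a * G (t - a) = A a := by
      simp only [hAdef]; ring
    rw [h2]
  -- integrability of the full integrand on the two pieces
  have hintIoc : IntegrableOn (fun a => f a * n (t, a)) (Set.Ioc 0 t) :=
    (hAint.add hBint).congr haeAB.symm
  have hintIoi : IntegrableOn (fun a => f a * n (t, a)) (Set.Ioi t) :=
    MeasureTheory.IntegrableOn.congr_fun (hCint.add hDint) (fun a h => (heqC h).symm)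
      measurableSet_Ioi
  -- split the integral
  have hsplit : (∫ a in Set.Ioi (0:ℝ), f a * n (t, a)) =
      (∫ a in Set.Ioc 0 t, f a * n (t, a)) + ∫ a in Set.Ioi t, f a * n (t, a) := by
    rw [← setIntegral_union (Set.Ioc_disjoint_Ioi le_rfl) measurableSet_Ioi hintIoc hintIoi,
      Set.Ioc_union_Ioi_eq_Ioi ht]
  have hIoc : (∫ a in Set.Ioc 0 t, f a * n (t, a)) =
      (∫ a in (0:ℝ)..t, A a) + ∫ a in (0:ℝ)..t, B a := by
    rw [integral_congr_ae haeAB, integral_add hAint hBint,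
      intervalIntegral.integral_of_le ht, intervalIntegral.integral_of_le ht]
  have hIoi : (∫ a in Set.Ioi t, f a * n (t, a)) =
      (∫ a in Set.Ioi t, C a) + ∫ a in Set.Ioi t, D a := by
    rw [setIntegral_congr_fun measurableSet_Ioi heqC, integral_add hCint hDint]
  rw [hGn t ht, hsplit, hIoc, hIoi]
  ring
end
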